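/- Let t ∈ ℝ, h > 0, and η ∈ ℝ with t + 2h ≤ η ≤ t + 3h. Let A ⊆ (t + h, η) ∩ ℚ and B ⊆ (t, η) ∩ ℚ be finite sets. Then there exists a strictly increasing continuous bijection ψ from [t + h, η] onto [t, η] with ψ(t + h) = t and ψ(η) = η, such that: (i) ψ(x) ∈ ℚ for every x ∈ A; (ii) ψ⁻¹(y) ∈ ℚ for every y ∈ B; and (iii) for all r, s ∈ [t + h, η], |r − s| ≤ |ψ(r) − ψ(s)| ≤ 3·|r − s|. -/

import Mathlib

noncomputable def pickRat (ε x : ℝ) : ℝ :=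
  if h : 0 < ε then ((exists_rat_near x h).choose : ℝ) else 0

lemma pickRat_mem (ε x : ℝ) : pickRat ε x ∈ Set.range ((↑) : ℚ → ℝ) := by
  unfold pickRat; split
  · exact ⟨_, rfl⟩
  · exact ⟨0, by simp⟩

lemma pickRat_near {ε : ℝ} (hε : 0 < ε) (x : ℝ) : |x - pickRat ε x| < ε := by
  unfold pickRat; rw [dif_pos hε]; exact (exists_rat_near x hε).choose_spec

noncomputable def tentFn (w c x : ℝ) : ℝ := max (w - |x - c|) 0 / w

noncomputable def clampTo (w c x : ℝ) : ℝ := max (c - w) (min x (c + w))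

lemma tentFn_eq_zero {w c x : ℝ} (h : w ≤ |x - c|) : tentFn w c x = 0 := by
  unfold tentFn
  rw [max_eq_right (by linarith), zero_div]

lemma tentFn_self {w : ℝ} (hw : 0 < w) (c : ℝ) : tentFn w c c = 1 := by
  unfold tentFn
  rw [sub_self, abs_zero, sub_zero, max_eq_left hw.le, div_self hw.ne']



lemma tentFn_eq_clamp {w : ℝ} (hw : 0 < w) (c x : ℝ) :
    tentFn w c x = (w - |clampTo w c x - c|) / w := by
  unfold tentFn clampTo
  rcases le_total x (c - w) with h1 | h1
  · rw [min_eq_left (by linarith), max_eq_left h1]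
    have h2 : |x - c| ≥ w := by
      rw [abs_sub_comm, abs_of_nonneg (by linarith)]; linarith
    have h3 : |c - w - c| = w := by
      rw [show c - w - c = -w by ring, abs_neg, abs_of_pos hw]
    rw [max_eq_right (by linarith), h3, sub_self]
  · rcases le_total x (c + w) with h2 | h2
    · rw [min_eq_left h2, max_eq_right h1]
      have h3 : |x - c| ≤ w := abs_le.2 ⟨by linarith, by linarith⟩
      rw [max_eq_left (by linarith)]
    · have h3 : |x - c| ≥ w := by rw [abs_of_nonneg (by linarith)]; linarith
      have h4 : |c + w - c| = w := by rw [show c + w - c = w by ring, abs_of_pos hw]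
      rw [min_eq_right h2, max_eq_right (by linarith : w - |x - c| ≤ 0),
        max_eq_right (by linarith : c - w ≤ c + w), h4, sub_self]

lemma clampTo_mono {w c : ℝ} : Monotone (clampTo w c) := fun r s hrs =>
  max_le_max le_rfl (min_le_min hrs le_rfl)

lemma tentFn_diff_le {w : ℝ} (hw : 0 < w) (c r s : ℝ) :
    |tentFn w c r - tentFn w c s| ≤ |clampTo w c r - clampTo w c s| / w := by
  have hnum : |(w - |clampTo w c r - c|) - (w - |clampTo w c s - c|)| ≤
      |clampTo w c r - clampTo w c s| := by
    set a := clampTo w c r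
    set b := clampTo w c s
    have h := abs_abs_sub_abs_le_abs_sub (b - c) (a - c)
    have e1 : w - |a - c| - (w - |b - c|) = |b - c| - |a - c| := by ring
    have e2 : b - c - (a - c) = b - a := by ring
    have h2 : |b - c - (a - c)| = |a - b| := by rw [e2, abs_sub_comm]
    rw [e1, ← h2]
    exact h
  rw [tentFn_eq_clamp hw, tentFn_eq_clamp hw, div_sub_div_same, abs_div, abs_of_pos hw]
  gcongr

lemma sum_clamp_sub_le {w : ℝ} (hw : 0 < w) (C : Finset ℝ)
    (hsep : ∀ p ∈ C, ∀ q ∈ C, p ≠ q → 2 * w ≤ |p - q|) :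
    ∀ r s : ℝ, r ≤ s → ∑ p ∈ C, (clampTo w p s - clampTo w p r) ≤ s - r := by
  induction C using Finset.induction_on_max with
  | empty => intro r s hrs; simp; linarith
  | insert a C hmax ih =>
    intro r s hrs
    have haC : a ∉ C := fun hin => lt_irrefl a (hmax a hin)
    have hsep' : ∀ p ∈ C, ∀ q ∈ C, p ≠ q → 2 * w ≤ |p - q| := fun p hp q hq hpq =>
      hsep p (Finset.mem_insert_of_mem hp) q (Finset.mem_insert_of_mem hq) hpq
    have hgap : ∀ p ∈ C, p + w ≤ a - w := by
      intro p hp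
      have h1 := hmax p hp
      have h2 := hsep a (Finset.mem_insert_self a _) p (Finset.mem_insert_of_mem hp)
        (by intro he; rw [he] at h1; exact lt_irrefl p h1)
      rw [abs_of_pos (by linarith)] at h2
      linarith
    rw [Finset.sum_insert haC]
    rcases le_total r (a - w) with hc | hc
    · have hrs' : r ≤ min s (a - w) := le_min hrs hc
      have hrest : ∀ p ∈ C, clampTo w p s = clampTo w p (min s (a - w)) := by
        intro p hp
        have h3 := hgap p hp
        simp only [clampTo, max_def, min_def]
        split_ifs <;> linarith
      have hsum : ∑ p ∈ C, (clampTo w p s - clampTo w p r)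
          = ∑ p ∈ C, (clampTo w p (min s (a - w)) - clampTo w p r) :=
        Finset.sum_congr rfl fun p hp => by rw [hrest p hp]
      have hterm : clampTo w a s - clampTo w a r ≤ s - min s (a - w) := by
        simp only [clampTo, max_def, min_def]
        split_ifs <;> linarith
      have hih := ih hsep' r (min s (a - w)) hrs'
      have hmin : min s (a - w) ≤ s := min_le_left _ _
      rw [hsum]
      linarith
    · have hrest : ∀ p ∈ C, clampTo w p s - clampTo w p r = 0 := by
        intro p hp
        have h3 := hgap p hp
        simp only [clampTo, max_def, min_def]
        split_ifs <;> linarith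
      have hsum : ∑ p ∈ C, (clampTo w p s - clampTo w p r) = 0 :=
        Finset.sum_eq_zero hrest
      have hterm : clampTo w a s - clampTo w a r ≤ s - r := by
        simp only [clampTo, max_def, min_def]
        split_ifs <;> linarith
      rw [hsum]
      linarith

lemma tent_sum_lip_aux {w : ℝ} (hw : 0 < w) (Z : Finset ℝ) (c v : ℝ → ℝ)
    (hsep : ∀ z ∈ Z, ∀ z' ∈ Z, z ≠ z' → 2 * w ≤ |c z - c z'|)
    (hv : ∀ z ∈ Z, |v z| ≤ w / 2) (r s : ℝ) (hrs : r ≤ s) :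
    |(∑ z ∈ Z, v z * tentFn w (c z) r) - ∑ z ∈ Z, v z * tentFn w (c z) s|
      ≤ (1 / 2) * |r - s| := by
  have hcinj : ∀ z ∈ Z, ∀ z' ∈ Z, c z = c z' → z = z' := by
    intro z hz z' hz' he
    by_contra hne
    have := hsep z hz z' hz' hne
    rw [he, sub_self, abs_zero] at this
    linarith
  have hsepC : ∀ p ∈ Z.image c, ∀ q ∈ Z.image c, p ≠ q → 2 * w ≤ |p - q| := by
    intro p hp q hq hpq
    obtain ⟨z, hz, rfl⟩ := Finset.mem_image.1 hp
    obtain ⟨z', hz', rfl⟩ := Finset.mem_image.1 hq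
    exact hsep z hz z' hz' (fun he => hpq (by rw [he]))
  have key : ∑ p ∈ Z.image c, (clampTo w p s - clampTo w p r) ≤ s - r :=
    sum_clamp_sub_le hw _ hsepC r s hrs
  have himg : ∑ p ∈ Z.image c, (clampTo w p s - clampTo w p r)
      = ∑ z ∈ Z, (clampTo w (c z) s - clampTo w (c z) r) :=
    Finset.sum_image hcinj
  calc |(∑ z ∈ Z, v z * tentFn w (c z) r) - ∑ z ∈ Z, v z * tentFn w (c z) s|
      = |∑ z ∈ Z, (v z * tentFn w (c z) r - v z * tentFn w (c z) s)| := by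
        rw [Finset.sum_sub_distrib]
    _ ≤ ∑ z ∈ Z, |v z * tentFn w (c z) r - v z * tentFn w (c z) s| :=
        Finset.abs_sum_le_sum_abs _ _
    _ ≤ ∑ z ∈ Z, (1 / 2) * (clampTo w (c z) s - clampTo w (c z) r) := by
        apply Finset.sum_le_sum
        intro z hz
        rw [← mul_sub, abs_mul]
        have h1 := tentFn_diff_le hw (c z) r s
        have h2 := hv z hz
        have h3 : |clampTo w (c z) r - clampTo w (c z) s|
            = clampTo w (c z) s - clampTo w (c z) r := by
          rw [abs_sub_comm, abs_of_nonneg (by linarith [clampTo_mono (c := c z) (w := w) hrs])]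
        calc |v z| * |tentFn w (c z) r - tentFn w (c z) s|
            ≤ (w / 2) * ((clampTo w (c z) s - clampTo w (c z) r) / w) := by
              apply mul_le_mul h2 (by rw [← h3]; exact h1) (abs_nonneg _) (by linarith)
          _ = (1 / 2) * (clampTo w (c z) s - clampTo w (c z) r) := by
              field_simp
    _ = (1 / 2) * ∑ z ∈ Z, (clampTo w (c z) s - clampTo w (c z) r) := by
        rw [Finset.mul_sum]
    _ ≤ (1 / 2) * (s - r) := by linarith [himg ▸ key]
    _ = (1 / 2) * |r - s| := by rw [abs_sub_comm, abs_of_nonneg (by linarith)]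

lemma tent_sum_lip {w : ℝ} (hw : 0 < w) (Z : Finset ℝ) (c v : ℝ → ℝ)
    (hsep : ∀ z ∈ Z, ∀ z' ∈ Z, z ≠ z' → 2 * w ≤ |c z - c z'|)
    (hv : ∀ z ∈ Z, |v z| ≤ w / 2) (r s : ℝ) :
    |(∑ z ∈ Z, v z * tentFn w (c z) r) - ∑ z ∈ Z, v z * tentFn w (c z) s|
      ≤ (1 / 2) * |r - s| := by
  rcases le_total r s with hrs | hrs
  · exact tent_sum_lip_aux hw Z c v hsep hv r s hrs
  · rw [abs_sub_comm, abs_sub_comm r s]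
    exact tent_sum_lip_aux hw Z c v hsep hv s r hrs

lemma tentFn_continuous (w c : ℝ) : Continuous (fun x => tentFn w c x) := by
  unfold tentFn; fun_prop

/-- Existence of the time-change homeomorphism of the proof of Lemma 3.1: a strictly
increasing continuous bijection `ψ : [t+h, η] → [t, η]` with `ψ(t+h) = t`, `ψ(η) = η`,
mapping the prescribed finite set `A` of rational times to rational times, whose inverse maps
the prescribed finite set `B` of rational times to rational times, and satisfying
`|r - s| ≤ |ψ r - ψ s| ≤ 3 |r - s|`. -/
theorem exists_time_change_homeomorphism (t h η : ℝ) (hh : 0 < h)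
    (hη₁ : t + 2 * h ≤ η) (hη₂ : η ≤ t + 3 * h)
    (A B : Finset ℝ)
    (hA : ∀ x ∈ A, x ∈ Set.Ioo (t + h) η ∧ x ∈ Set.range ((↑) : ℚ → ℝ))
    (hB : ∀ y ∈ B, y ∈ Set.Ioo t η ∧ y ∈ Set.range ((↑) : ℚ → ℝ)) :
    ∃ ψ : ℝ → ℝ,
      StrictMonoOn ψ (Set.Icc (t + h) η) ∧
      ContinuousOn ψ (Set.Icc (t + h) η) ∧
      Set.BijOn ψ (Set.Icc (t + h) η) (Set.Icc t η) ∧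
      ψ (t + h) = t ∧ ψ η = η ∧
      (∀ x ∈ A, ψ x ∈ Set.range ((↑) : ℚ → ℝ)) ∧
      (∀ y ∈ B, ∀ x ∈ Set.Icc (t + h) η, ψ x = y → x ∈ Set.range ((↑) : ℚ → ℝ)) ∧
      (∀ r ∈ Set.Icc (t + h) η, ∀ s ∈ Set.Icc (t + h) η,
        |r - s| ≤ |ψ r - ψ s| ∧ |ψ r - ψ s| ≤ 3 * |r - s|) := by
  classical
  have hhη : t + h < η := by linarith
  have hd : (0:ℝ) < η - t - h := by linarith
  set σ : ℝ := (η - t) / (η - t - h) with hσdef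
  have hσ1 : (3:ℝ)/2 ≤ σ := by rw [hσdef, le_div_iff₀ hd]; linarith
  have hσ2 : σ ≤ 2 := by rw [hσdef, div_le_iff₀ hd]; linarith
  have hσ0 : (0:ℝ) < σ := lt_of_lt_of_le (by norm_num) hσ1
  set ψ₀ : ℝ → ℝ := fun x => t + σ * (x - (t + h)) with hψ₀def
  set g : ℝ → ℝ := fun y => (t + h) + (y - t) / σ with hgdef
  have hgψ : ∀ y, ψ₀ (g y) = y := by
    intro y; simp only [hψ₀def, hgdef]; field_simp; ring
  have hψ₀t : ψ₀ (t + h) = t := by simp [hψ₀def]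
  have hψ₀η : ψ₀ η = η := by
    simp only [hψ₀def, hσdef]; field_simp; ring
  have hgmono : ∀ b b' : ℝ, b < b' → g b < g b' := by
    intro b b' hlt
    simp only [hgdef]
    have : (b - t) / σ < (b' - t) / σ := by gcongr ?x / σ; linarith
    linarith
  have hgt : g t = t + h := by simp [hgdef]
  have hgη : g η = η := by
    have h1 := hgψ η
    have h2 : ψ₀ (g η) = ψ₀ η := by rw [h1, hψ₀η]
    have h3 : ∀ x x', ψ₀ x = ψ₀ x' → x = x' := by
      intro x x' hxx
      simp only [hψ₀def] at hxx
      have : σ * (x - (t+h)) = σ * (x' - (t+h)) := by linarith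
      have := mul_left_cancel₀ hσ0.ne' this
      linarith
    exact h3 _ _ h2
  set Z : Finset ℝ := A ∪ B.image g with hZdef
  have hZmem : ∀ z ∈ Z, z ∈ Set.Ioo (t + h) η := by
    intro z hz
    rw [hZdef, Finset.mem_union] at hz
    rcases hz with hz | hz
    · exact (hA z hz).1
    · obtain ⟨b, hb, rfl⟩ := Finset.mem_image.1 hz
      obtain ⟨⟨hb1, hb2⟩, -⟩ := hB b hb
      constructor
      · have := hgmono t b hb1; rw [hgt] at this; exact this
      · have := hgmono b η hb2; rw [hgη] at this; exact this
  set S : Finset ℝ := insert (t + h) (insert η Z) with hSdef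
  have htS : (t + h) ∈ S := Finset.mem_insert_self _ _
  have hηS : η ∈ S := Finset.mem_insert_of_mem (Finset.mem_insert_self _ _)
  have hZS : ∀ z ∈ Z, z ∈ S := fun z hz =>
    Finset.mem_insert_of_mem (Finset.mem_insert_of_mem hz)
  set D : Finset ℝ := Finset.image (fun p : ℝ × ℝ => |p.1 - p.2|)
    ((S ×ˢ S).filter (fun p => p.1 ≠ p.2)) with hDdef
  have hDne : D.Nonempty := by
    refine ⟨|t + h - η|, Finset.mem_image.2 ⟨(t + h, η), ?_, rfl⟩⟩
    exact Finset.mem_filter.2 ⟨Finset.mem_product.2 ⟨htS, hηS⟩, hhη.ne⟩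
  set δ : ℝ := D.min' hDne with hδdef
  have hδpos : 0 < δ := by
    obtain ⟨p, hp, hpe⟩ := Finset.mem_image.1 (D.min'_mem hDne)
    have hne := (Finset.mem_filter.1 hp).2
    rw [hδdef, ← hpe]
    exact abs_pos.2 (sub_ne_zero.2 hne)
  have hδle : ∀ p ∈ S, ∀ q ∈ S, p ≠ q → δ ≤ |p - q| := by
    intro p hp q hq hne
    exact D.min'_le _ (Finset.mem_image.2
      ⟨(p, q), Finset.mem_filter.2 ⟨Finset.mem_product.2 ⟨hp, hq⟩, hne⟩, rfl⟩)
  set w : ℝ := δ / 4 with hwdef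
  have hw : 0 < w := by rw [hwdef]; linarith
  set c : ℝ → ℝ := fun z => if z ∈ A then z else pickRat (δ / 16) z with hcdef
  have hcnear : ∀ z, |z - c z| ≤ δ / 16 := by
    intro z
    rw [hcdef]
    by_cases hz : z ∈ A
    · simp [hz]; linarith
    · simp only [if_neg hz]
      exact (pickRat_near (by linarith) z).le
  set yv : ℝ → ℝ := fun z => if ψ₀ z ∈ B then ψ₀ z else pickRat (w / 2) (ψ₀ (c z))
    with hyvdef
  set v : ℝ → ℝ := fun z => yv z - ψ₀ (c z) with hvdef
  have hvsmall : ∀ z ∈ Z, |v z| ≤ w / 2 := by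
    intro z hz
    rw [hvdef, hyvdef]
    by_cases hzB : ψ₀ z ∈ B
    · simp only [if_pos hzB]
      have h1 : ψ₀ z - ψ₀ (c z) = σ * (z - c z) := by simp only [hψ₀def]; ring
      rw [h1, abs_mul, abs_of_pos hσ0]
      have h2 := hcnear z
      have h3 : σ * |z - c z| ≤ 2 * (δ / 16) := by
        apply mul_le_mul hσ2 h2 (abs_nonneg _) (by norm_num)
      rw [hwdef]; linarith
    · simp only [if_neg hzB]
      rw [abs_sub_comm]
      exact (pickRat_near (by linarith) (ψ₀ (c z))).le
  have hsep : ∀ z ∈ Z, ∀ z' ∈ Z, z ≠ z' → 2 * w ≤ |c z - c z'| := by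
    intro z hz z' hz' hne
    have h1 := hδle z (hZS z hz) z' (hZS z' hz') hne
    have h2 := hcnear z
    have h3 := hcnear z'
    have h4 := abs_sub_le z (c z) z'
    have h5 := abs_sub_le (c z) (c z') z'
    have h6 : |z' - c z'| = |c z' - z'| := abs_sub_comm _ _
    rw [hwdef]
    linarith
  have hend : ∀ z ∈ Z, w ≤ |t + h - c z| ∧ w ≤ |η - c z| := by
    intro z hz
    obtain ⟨hz1, hz2⟩ := hZmem z hz
    have h1 := hδle z (hZS z hz) (t + h) htS (ne_of_gt hz1)
    have h2 := hδle z (hZS z hz) η hηS (ne_of_lt hz2)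
    have h3 := hcnear z
    have h4 := abs_sub_le (t + h) (c z) z
    have h5 := abs_sub_le η (c z) z
    have h6 : |c z - z| = |z - c z| := abs_sub_comm _ _
    have h7 : |z - (t + h)| = |t + h - z| := abs_sub_comm _ _
    have h8 : |z - η| = |η - z| := abs_sub_comm _ _
    rw [hwdef]
    constructor <;> linarith
  set e : ℝ → ℝ := fun x => ∑ z ∈ Z, v z * tentFn w (c z) x with hedef
  set ψ : ℝ → ℝ := fun x => ψ₀ x + e x with hψdef
  clear_value σ ψ₀ g Z S D δ w c yv v e ψ
  have hlipe : ∀ r s, |e r - e s| ≤ (1/2) * |r - s| := by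
    intro r s
    rw [hedef]
    exact tent_sum_lip hw Z c v hsep hvsmall r s
  have heat : ∀ z ∈ Z, e (c z) = v z := by
    intro z hz
    rw [hedef]
    show ∑ z' ∈ Z, v z' * tentFn w (c z') (c z) = v z
    rw [Finset.sum_eq_single_of_mem z hz]
    · rw [tentFn_self hw, mul_one]
    · intro z' hz' hne
      rw [tentFn_eq_zero, mul_zero]
      have h9 := hsep z hz z' hz' (fun he => hne (he ▸ rfl))
      linarith
  have hψat : ∀ z ∈ Z, ψ (c z) = yv z := by
    intro z hz
    rw [hψdef]
    show ψ₀ (c z) + e (c z) = yv z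
    rw [heat z hz, hvdef]
    ring
  have hψt : ψ (t + h) = t := by
    rw [hψdef]
    show ψ₀ (t + h) + e (t + h) = t
    have he0 : e (t + h) = 0 := by
      rw [hedef]
      apply Finset.sum_eq_zero
      intro z hz
      rw [tentFn_eq_zero ((hend z hz).1), mul_zero]
    rw [he0, hψ₀t, add_zero]
  have hψη : ψ η = η := by
    rw [hψdef]
    show ψ₀ η + e η = η
    have he0 : e η = 0 := by
      rw [hedef]
      apply Finset.sum_eq_zero
      intro z hz
      rw [tentFn_eq_zero ((hend z hz).2), mul_zero]
    rw [he0, hψ₀η, add_zero]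
  -- key two-sided bounds
  have hkey : ∀ r s : ℝ, |r - s| ≤ |ψ r - ψ s| ∧ |ψ r - ψ s| ≤ (5/2) * |r - s| := by
    intro r s
    have hsplit : σ * (r - s) = (ψ r - ψ s) - (e r - e s) := by
      rw [hψdef]; show σ * (r - s) = (ψ₀ r + e r) - (ψ₀ s + e s) - (e r - e s)
      simp only [hψ₀def]; ring
    have habs : |σ * (r - s)| = σ * |r - s| := by
      rw [abs_mul, abs_of_pos hσ0]
    have h1 : |σ * (r - s)| ≤ |ψ r - ψ s| + |e r - e s| := by
      rw [hsplit]; exact abs_sub _ _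
    have h2 : |ψ r - ψ s| ≤ |σ * (r - s)| + |e r - e s| := by
      have : ψ r - ψ s = σ * (r - s) + (e r - e s) := by rw [hsplit]; ring
      rw [this]; exact abs_add_le _ _
    have h3 := hlipe r s
    have h4 : (3/2) * |r - s| ≤ σ * |r - s| :=
      mul_le_mul_of_nonneg_right hσ1 (abs_nonneg _)
    have h5 : σ * |r - s| ≤ 2 * |r - s| :=
      mul_le_mul_of_nonneg_right hσ2 (abs_nonneg _)
    constructor <;> [skip; skip] <;> linarith [habs ▸ h1, habs ▸ h2]
  have hmono : ∀ r s : ℝ, r ≤ s → s - r ≤ ψ s - ψ r := by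
    intro r s hrs
    have hsplit : ψ s - ψ r = σ * (s - r) + (e s - e r) := by
      rw [hψdef]; show (ψ₀ s + e s) - (ψ₀ r + e r) = σ * (s - r) + (e s - e r)
      simp only [hψ₀def]; ring
    have h3 := hlipe s r
    have habs : |s - r| = s - r := abs_of_nonneg (by linarith)
    rw [habs] at h3
    have h4 : -((1/2) * (s - r)) ≤ e s - e r := neg_le_of_abs_le h3
    have h5 : (3/2) * (s - r) ≤ σ * (s - r) :=
      mul_le_mul_of_nonneg_right hσ1 (by linarith)
    linarith
  have hsm : StrictMonoOn ψ (Set.Icc (t + h) η) := by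
    intro r _ s _ hlt
    have := hmono r s hlt.le
    linarith
  have hcont : ContinuousOn ψ (Set.Icc (t + h) η) := by
    apply Continuous.continuousOn
    rw [hψdef]
    apply Continuous.add
    · rw [hψ₀def]; fun_prop
    · rw [hedef]
      exact continuous_finset_sum _ fun z _ =>
        (continuous_const.mul (tentFn_continuous w (c z)))
  have hmaps : Set.MapsTo ψ (Set.Icc (t + h) η) (Set.Icc t η) := by
    intro x hx
    obtain ⟨hx1, hx2⟩ := hx
    have h1 := hmono (t + h) x hx1
    have h2 := hmono x η hx2
    rw [hψt] at h1
    rw [hψη] at h2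
    exact ⟨by linarith, by linarith⟩
  have hbij : Set.BijOn ψ (Set.Icc (t + h) η) (Set.Icc t η) := by
    refine ⟨hmaps, hsm.injOn, ?_⟩
    intro y hy
    have := intermediate_value_Icc hhη.le hcont
    rw [hψt, hψη] at this
    exact this hy
  refine ⟨ψ, hsm, hcont, hbij, hψt, hψη, ?_, ?_, ?_⟩
  · -- images of A rational
    intro a ha
    have haZ : a ∈ Z := by rw [hZdef]; exact Finset.mem_union_left _ ha
    have hca : c a = a := by rw [hcdef]; simp [ha]
    have := hψat a haZ
    rw [hca] at this
    rw [this, hyvdef]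
    by_cases hab : ψ₀ a ∈ B
    · simp only [if_pos hab]
      exact (hB _ hab).2
    · simp only [if_neg hab]
      exact pickRat_mem _ _
  · -- preimages of B rational
    intro b hb x hx hψx
    have hgbZ : g b ∈ Z := by
      rw [hZdef]
      exact Finset.mem_union_right _ (Finset.mem_image_of_mem g hb)
    have hψ₀gb : ψ₀ (g b) = b := hgψ b
    have hyv : yv (g b) = b := by rw [hyvdef]; simp only [hψ₀gb, if_pos hb]
    have hψcb : ψ (c (g b)) = b := by rw [hψat _ hgbZ, hyv]
    have hcIcc : c (g b) ∈ Set.Icc (t + h) η := by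
      obtain ⟨hz1, hz2⟩ := hZmem _ hgbZ
      have h1 := hδle (g b) (hZS _ hgbZ) (t + h) htS (ne_of_gt hz1)
      have h2 := hδle (g b) (hZS _ hgbZ) η hηS (ne_of_lt hz2)
      have h3 := hcnear (g b)
      obtain ⟨h4a, h4b⟩ := abs_le.1 h3
      have h5 : |g b - (t + h)| = g b - (t + h) := abs_of_pos (by linarith)
      have h6 : |g b - η| = η - g b := by rw [abs_sub_comm]; exact abs_of_pos (by linarith)
      rw [h5] at h1
      rw [h6] at h2
      have k1 : g b - δ / 16 ≤ c (g b) := by linarith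
      have k2 : c (g b) ≤ g b + δ / 16 := by linarith
      have k3 : t + h + δ ≤ g b := by linarith
      have k4 : g b ≤ η - δ := by linarith
      constructor
      · exact le_trans (by linarith : t + h ≤ g b - δ / 16) k1
      · exact le_trans k2 (by linarith only [k4, hδpos] : g b + δ / 16 ≤ η)
    have hxc : x = c (g b) := hsm.injOn hx hcIcc (by rw [hψx, hψcb])
    rw [hxc, hcdef]
    by_cases hgA : g b ∈ A
    · simp only [if_pos hgA]
      exact (hA _ hgA).2
    · simp only [if_neg hgA]
      exact pickRat_mem _ _
  · -- bi-Lipschitz bounds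
    intro r _ s _
    obtain ⟨h1, h2⟩ := hkey r s
    refine ⟨h1, h2.trans ?_⟩
    have := abs_nonneg (r - s)
    linarith
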